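/- Let A be an n×n max-plus matrix with a self-loop at node h of weight 0 (A_{h,h} = 0) such that every cycle of G(A) has weight at most 0. Then for every node i, the sequence k ↦ (A^⊗k)_{i,h} is nondecreasing in k and constant for k ≥ n-1, i.e., (A^⊗k)_{i,h} = (A^⊗(n-1))_{i,h} for all k ≥ n-1. -/

import Mathlib

/-- Max-plus matrix product: `(A ⊗ B) i j = max_h (A i h + B h j)` over `ℝ ∪ {-∞}`. -/
noncomputable def mpMul {n : ℕ} (A B : Fin n → Fin n → EReal) : Fin n → Fin n → EReal :=
  fun i j => ⨆ h : Fin n, A i h + B h j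

/-- Max-plus matrix power. -/
noncomputable def mpPow {n : ℕ} (A : Fin n → Fin n → EReal) : ℕ → Fin n → Fin n → EReal
  | 0 => fun i j => if i = j then 0 else ⊥
  | k + 1 => mpMul A (mpPow A k)

/-- `f` lists the successive nodes of a walk of length `k` in `G(A)`:
all consecutive pairs are edges, i.e., have finite weight. -/
def IsWalk {n : ℕ} (A : Fin n → Fin n → EReal) {k : ℕ} (f : Fin (k + 1) → Fin n) : Prop :=
  ∀ t : Fin k, A (f t.castSucc) (f t.succ) ≠ ⊥

/-- The weight of a walk: sum of the weights of its edges. -/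
noncomputable def walkWeight {n : ℕ} (A : Fin n → Fin n → EReal) {k : ℕ}
    (f : Fin (k + 1) → Fin n) : EReal :=
  ∑ t : Fin k, A (f t.castSucc) (f t.succ)

/-- A cycle: a nonempty closed walk in which only the start and end node coincide. -/
def IsCycle {n : ℕ} (A : Fin n → Fin n → EReal) {k : ℕ} (f : Fin (k + 1) → Fin n) : Prop :=
  0 < k ∧ IsWalk A f ∧ f 0 = f (Fin.last k) ∧
    Function.Injective (fun t : Fin k => f t.castSucc)

/-- weight of an ℕ-indexed walk of length k -/
noncomputable def natW {n : ℕ} (A : Fin n → Fin n → EReal) (k : ℕ) (f : ℕ → Fin n) : EReal :=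
  ∑ t ∈ Finset.range k, A (f t) (f (t + 1))

lemma natW_le_mpPow {n : ℕ} (A : Fin n → Fin n → EReal) :
    ∀ (k : ℕ) (f : ℕ → Fin n), natW A k f ≤ mpPow A k (f 0) (f k) := by
  intro k
  induction k with
  | zero => intro f; simp [natW, mpPow]
  | succ k ih =>
    intro f
    have h1 : natW A (k + 1) f = A (f 0) (f 1) + natW A k (fun t => f (t + 1)) := by
      unfold natW
      rw [Finset.sum_range_succ' (fun t => A (f t) (f (t + 1))) k]
      rw [add_comm]
    rw [h1]
    have h2 := ih (fun t => f (t + 1))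
    calc A (f 0) (f 1) + natW A k (fun t => f (t + 1))
        ≤ A (f 0) (f 1) + mpPow A k (f 1) (f (k + 1)) := by
          exact add_le_add le_rfl h2
      _ ≤ mpPow A (k + 1) (f 0) (f (k + 1)) := le_iSup (fun m => A (f 0) m + mpPow A k m (f (k+1))) (f 1)

lemma mpPow_attained {n : ℕ} (A : Fin n → Fin n → EReal) :
    ∀ (k : ℕ) (i j : Fin n), mpPow A k i j = ⊥ ∨
      ∃ f : ℕ → Fin n, f 0 = i ∧ f k = j ∧ mpPow A k i j ≤ natW A k f := by
  intro k
  induction k with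
  | zero =>
    intro i j
    by_cases hij : i = j
    · right; exact ⟨fun _ => i, rfl, by simp [hij], by simp [mpPow, hij, natW]⟩
    · left; simp [mpPow, hij]
  | succ k ih =>
    intro i j
    have : Nonempty (Fin n) := ⟨i⟩
    obtain ⟨m, hm⟩ := Finite.exists_max (fun m => A i m + mpPow A k m j)
    have hrfl : mpPow A (k + 1) i j = ⨆ m, A i m + mpPow A k m j := rfl
    have hsup : mpPow A (k + 1) i j = A i m + mpPow A k m j := by
      rw [hrfl]
      exact le_antisymm (iSup_le hm) (le_iSup (fun m => A i m + mpPow A k m j) m)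
    rcases ih m j with hbot | ⟨g, hg0, hgk, hgle⟩
    · left; rw [hsup, hbot, EReal.add_bot]
    · by_cases hAb : A i m = ⊥
      · left; rw [hsup, hAb, EReal.bot_add]
      · right
        refine ⟨fun t => if t = 0 then i else g (t - 1), by simp, by simp [hgk], ?_⟩
        have hW : natW A (k + 1) (fun t => if t = 0 then i else g (t - 1)) =
            A i (g 0) + natW A k g := by
          unfold natW
          rw [Finset.sum_range_succ' (fun t => A ((fun t => if t = 0 then i else g (t - 1)) t)
            ((fun t => if t = 0 then i else g (t - 1)) (t + 1))) k]
          simp only [Nat.succ_ne_zero, if_false, Nat.add_sub_cancel, if_pos rfl]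
          rw [add_comm]
          simp
        rw [hW, hsup, hg0]
        exact add_le_add le_rfl hgle

lemma mpPow_succ_le {n : ℕ} (A : Fin n → Fin n → EReal) (h : Fin n) (hloop : A h h = 0) :
    ∀ (k : ℕ) (i : Fin n), mpPow A k i h ≤ mpPow A (k + 1) i h := by
  intro k
  induction k with
  | zero =>
    intro i
    have : mpPow A 1 i h ≥ A i h := by
      have := le_iSup (fun m => A i m + mpPow A 0 m h) h
      simpa [mpPow, mpMul, add_zero] using this
    by_cases hih : i = h
    · subst hih; simpa [mpPow, hloop] using this
    · simpa [mpPow, hih] using bot_le.trans (le_refl (mpPow A 1 i h))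
  | succ k ih =>
    intro i
    show (⨆ m, A i m + mpPow A k m h) ≤ ⨆ m, A i m + mpPow A (k + 1) m h
    exact iSup_mono fun m => add_le_add le_rfl (ih m)

lemma mpPow_mono {n : ℕ} (A : Fin n → Fin n → EReal) (h : Fin n) (hloop : A h h = 0)
    {k m : ℕ} (hkm : k ≤ m) (i : Fin n) : mpPow A k i h ≤ mpPow A m i h := by
  induction m with
  | zero => simp_all
  | succ m ih =>
    rcases Nat.lt_or_ge k (m + 1) with hlt | hge
    · exact (ih (Nat.lt_succ_iff.mp hlt)).trans (mpPow_succ_le A h hloop m i)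
    · have : k = m + 1 := le_antisymm hkm hge
      simp [this]

lemma natW_key {n : ℕ} (A : Fin n → Fin n → EReal) (h : Fin n) (hloop : A h h = 0)
    (hcyc : ∀ (k : ℕ) (f : Fin (k + 1) → Fin n), IsCycle A f → walkWeight A f ≤ 0)
    (i : Fin n) :
    ∀ (k : ℕ) (f : ℕ → Fin n), f 0 = i → f k = h → natW A k f ≤ mpPow A (n - 1) i h := by
  intro k
  induction k using Nat.strong_induction_on with
  | _ k IH =>
  intro f hf0 hfk
  rcases le_or_gt k (n - 1) with hk | hk
  · calc natW A k f ≤ mpPow A k i h := by rw [← hf0, ← hfk]; exact natW_le_mpPow A k f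
      _ ≤ mpPow A (n - 1) i h := mpPow_mono A h hloop hk i
  · -- k ≥ n
    have hn1 : 1 ≤ n := Nat.pos_of_ne_zero (by rintro rfl; exact i.elim0)
    have hnk : n ≤ k := by omega
    -- if some edge is ⊥, the total weight is ⊥
    by_cases hbot : ∃ t < k, A (f t) (f (t + 1)) = ⊥
    · obtain ⟨t, htk, ht⟩ := hbot
      have : natW A k f = ⊥ := by
        unfold natW
        rw [← Finset.add_sum_erase _ _ (Finset.mem_range.mpr htk), ht, EReal.bot_add]
      rw [this]; exact bot_le
    push_neg at hbot
    -- find the shortest repeat gap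
    have hP : ∃ d : ℕ, 0 < d ∧ ∃ a, a + d ≤ k ∧ f a = f (a + d) := by
      have hcard : Fintype.card (Fin n) < Fintype.card (Fin (n + 1)) := by simp
      obtain ⟨x, y, hxy, hfxy⟩ :=
        Fintype.exists_ne_map_eq_of_card_lt (fun t : Fin (n + 1) => f t) hcard
      rcases Nat.lt_or_ge (x : ℕ) (y : ℕ) with hlt | hge
      · exact ⟨y - x, by omega, x, by omega, by rw [hfxy]; congr 1; omega⟩
      · have hlt : (y : ℕ) < (x : ℕ) := by
          rcases Nat.lt_or_ge (y : ℕ) (x : ℕ) with h' | h'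
          · exact h'
          · exact absurd (Fin.ext (le_antisymm h' hge)) hxy
        exact ⟨x - y, by omega, y, by omega, by rw [← hfxy]; congr 1; omega⟩
    classical
    set d := Nat.find hP with hd_def
    obtain ⟨hd_pos, a, hadk, hfa⟩ := Nat.find_spec hP
    -- the segment [a, a+d] is a simple cycle
    set c : Fin (d + 1) → Fin n := fun t => f (a + t) with hc_def
    have hcyc_c : IsCycle A c := by
      refine ⟨hd_pos, ?_, ?_, ?_⟩
      · intro t
        have h1 : (t.castSucc : ℕ) = (t : ℕ) := rfl
        have h2 : (t.succ : ℕ) = (t : ℕ) + 1 := rfl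
        show A (f (a + (t.castSucc : ℕ))) (f (a + (t.succ : ℕ))) ≠ ⊥
        rw [h1, h2, ← Nat.add_assoc]
        exact hbot (a + t) (by have := t.isLt; omega)
      · show f (a + ((0 : Fin (d+1)) : ℕ)) = f (a + ((Fin.last d : Fin (d+1)) : ℕ))
        simp only [Fin.val_zero, Fin.val_last, Nat.add_zero]
        exact hfa
      · intro s t hst
        simp only [hc_def] at hst
        by_contra hne
        have hsv : (s.castSucc : ℕ) = (s : ℕ) := rfl
        have htv : (t.castSucc : ℕ) = (t : ℕ) := rfl
        rw [hsv, htv] at hst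
        rcases Nat.lt_or_ge (s : ℕ) (t : ℕ) with hlt | hge
        · have : ¬ (0 < (t : ℕ) - (s : ℕ) ∧ ∃ a', a' + ((t : ℕ) - (s : ℕ)) ≤ k ∧
              f a' = f (a' + ((t : ℕ) - (s : ℕ)))) :=
            Nat.find_min hP (by have := t.isLt; omega)
          exact this ⟨by omega, a + s, by have := t.isLt; omega,
            by rw [hst]; congr 1; omega⟩
        · have hlt : (t : ℕ) < (s : ℕ) := by
            rcases Nat.lt_or_ge (t : ℕ) (s : ℕ) with h' | h'
            · exact h'
            · exact absurd (Fin.ext (le_antisymm h' hge)) hne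
          have : ¬ (0 < (s : ℕ) - (t : ℕ) ∧ ∃ a', a' + ((s : ℕ) - (t : ℕ)) ≤ k ∧
              f a' = f (a' + ((s : ℕ) - (t : ℕ)))) :=
            Nat.find_min hP (by have := s.isLt; omega)
          exact this ⟨by omega, a + t, by have := s.isLt; omega,
            by rw [← hst]; congr 1; omega⟩
    have hCle : walkWeight A c ≤ 0 := hcyc d c hcyc_c
    -- the cycle weight equals the Ico-sum of edge weights
    have hCval : walkWeight A c = ∑ t ∈ Finset.Ico a (a + d), A (f t) (f (t + 1)) := by
      unfold walkWeight
      rw [Finset.sum_Ico_eq_sum_range]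
      simp only [Nat.add_sub_cancel_left]
      rw [← Fin.sum_univ_eq_sum_range (fun t => A (f (a + t)) (f (a + t + 1))) d]
      apply Finset.sum_congr rfl
      intro t _
      have h1 : (t.castSucc : ℕ) = (t : ℕ) := rfl
      have h2 : (t.succ : ℕ) = (t : ℕ) + 1 := rfl
      show A (f (a + (t.castSucc : ℕ))) (f (a + (t.succ : ℕ))) = _
      rw [h1, h2, ← Nat.add_assoc]
    -- spliced walk
    set k' := k - d with hk'_def
    set g : ℕ → Fin n := fun t => if t < a then f t else f (t + d) with hg_def
    have hak' : a ≤ k' := by omega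
    have hg0 : g 0 = i := by
      by_cases ha : 0 < a
      · simp [hg_def, ha, hf0]
      · have ha0 : a = 0 := by omega
        simp only [hg_def, Nat.lt_irrefl, if_neg (by omega : ¬ (0 : ℕ) < a)]
        rw [show (0 : ℕ) + d = a + d by omega, ← hfa, ha0, hf0]
    have hgk' : g k' = h := by
      simp only [hg_def, if_neg (by omega : ¬ k' < a)]
      rw [show k' + d = k by omega, hfk]
    -- edge identities
    have hedge1 : ∀ t < a, A (g t) (g (t + 1)) = A (f t) (f (t + 1)) := by
      intro t ht
      have hgt : g t = f t := by simp [hg_def, ht]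
      have hgt1 : g (t + 1) = f (t + 1) := by
        by_cases h1 : t + 1 < a
        · simp [hg_def, h1]
        · have : t + 1 = a := by omega
          simp only [hg_def, if_neg (by omega : ¬ t + 1 < a)]
          rw [this, ← hfa]
      rw [hgt, hgt1]
    have hedge2 : ∀ t, a ≤ t → A (g t) (g (t + 1)) = A (f (t + d)) (f (t + d + 1)) := by
      intro t ht
      have hgt : g t = f (t + d) := by simp [hg_def, if_neg (by omega : ¬ t < a)]
      have hgt1 : g (t + 1) = f (t + 1 + d) := by
        simp [hg_def, if_neg (by omega : ¬ t + 1 < a)]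
      rw [hgt, hgt1, show t + 1 + d = t + d + 1 from by omega]
    -- sum decomposition
    have hsplit : natW A k f = natW A k' g + walkWeight A c := by
      unfold natW
      rw [hCval]
      have e1 : ∑ t ∈ Finset.range k, A (f t) (f (t + 1)) =
          (∑ t ∈ Finset.range a, A (f t) (f (t + 1))) +
          ((∑ t ∈ Finset.Ico a (a + d), A (f t) (f (t + 1))) +
           (∑ t ∈ Finset.Ico (a + d) k, A (f t) (f (t + 1)))) := by
        rw [Finset.sum_Ico_consecutive _ (by omega : a ≤ a + d) (by omega : a + d ≤ k)]
        rw [Finset.sum_range_add_sum_Ico _ (by omega : a ≤ k)]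
      have e2 : ∑ t ∈ Finset.range k', A (g t) (g (t + 1)) =
          (∑ t ∈ Finset.range a, A (f t) (f (t + 1))) +
          (∑ t ∈ Finset.Ico (a + d) k, A (f t) (f (t + 1))) := by
        rw [← Finset.sum_range_add_sum_Ico (fun t => A (g t) (g (t + 1))) hak']
        congr 1
        · exact Finset.sum_congr rfl fun t ht => hedge1 t (Finset.mem_range.mp ht)
        · rw [Finset.sum_Ico_eq_sum_range, Finset.sum_Ico_eq_sum_range]
          have hlen : k - (a + d) = k' - a := by omega
          rw [hlen]
          apply Finset.sum_congr rfl
          intro t _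
          rw [hedge2 (a + t) (by omega), show a + t + d = a + d + t from by omega]
      rw [e1, e2]
      abel
    have hk'lt : k' < k := by omega
    calc natW A k f = natW A k' g + walkWeight A c := hsplit
      _ ≤ natW A k' g + 0 := add_le_add le_rfl hCle
      _ = natW A k' g := add_zero _
      _ ≤ mpPow A (n - 1) i h := IH k' hk'lt g hg0 hgk'

theorem mpPow_to_loop_monotone_and_stable {n : ℕ} (A : Fin n → Fin n → EReal)
    (h : Fin n) (hloop : A h h = 0)
    (hcyc : ∀ (k : ℕ) (f : Fin (k + 1) → Fin n), IsCycle A f → walkWeight A f ≤ 0) :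
    ∀ i : Fin n,
      (∀ k : ℕ, mpPow A k i h ≤ mpPow A (k + 1) i h) ∧
      (∀ k, n - 1 ≤ k → mpPow A k i h = mpPow A (n - 1) i h) := by
  intro i
  refine ⟨fun k => mpPow_succ_le A h hloop k i, fun k hk => ?_⟩
  refine le_antisymm ?_ (mpPow_mono A h hloop hk i)
  rcases mpPow_attained A k i h with hbot | ⟨f, hf0, hfk, hle⟩
  · rw [hbot]; exact bot_le
  · exact hle.trans (natW_key A h hloop hcyc i k f hf0 hfk)
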